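/- Let t ≤ m be natural numbers, let y be a binary list of length m−t and z a binary list of length m. Then g(y, z, t) = true if and only if there exists a subsequence x of z of length m−t with x ≤ y. -/

import Mathlib

/-- The greedy coverage function: `g y z t` decides whether `z` can be turned, by at most `t`
deletions, into a vector coordinate-wise dominated by `y`. It scans both lists, advancing on
both when `y`'s head dominates `z`'s head, and otherwise (head of `y` is `0`, head of `z` is
`1`) deleting `z`'s head at the cost of one of the `t` allowed deletions. -/
def g : List Bool → List Bool → ℕ → Bool
  | [], _, _ => true
  | _ :: _, [], _ => false
  | b :: y', c :: z', t =>
    if c ≤ b then g y' z' t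
    else
      match t with
      | 0 => false
      | t' + 1 => g (b :: y') z' t'
termination_by _ z _ => z.length

lemma g_iff (z : List Bool) : ∀ (y : List Bool) (t : ℕ), z.length = y.length + t →
    (g y z t = true ↔ ∃ x, x.Sublist z ∧ List.Forall₂ (· ≤ ·) x y) := by
  induction z with
  | nil =>
    intro y t h
    cases y with
    | nil =>
      simp only [g, true_iff]
      exact ⟨[], List.nil_sublist _, List.Forall₂.nil⟩
    | cons b y' => simp only [List.length_nil, List.length_cons] at h; omega
  | cons c z' ih =>
    intro y t h
    cases y with
    | nil =>
      simp only [g, true_iff]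
      exact ⟨[], List.nil_sublist _, List.Forall₂.nil⟩
    | cons b y' =>
      by_cases hcb : c ≤ b
      · rw [show g (b::y') (c::z') t = g y' z' t from by rw [g.eq_def]; simp [hcb]]
        rw [ih y' t (by simp only [List.length_cons] at h; omega)]
        constructor
        · rintro ⟨x, hx, hf⟩
          exact ⟨c :: x, hx.cons_cons c, List.Forall₂.cons hcb hf⟩
        · rintro ⟨x, hx, hf⟩
          cases hf with
          | @cons a _ x'' _ hab hf' =>
            refine ⟨x'', ?_, hf'⟩
            cases hx with
            | cons _ h2 => exact (List.sublist_cons_self a x'').trans h2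
            | cons_cons _ h2 => exact h2
      · have hb : b = false := by revert hcb; cases b <;> simp
        have hc : c = true := by revert hcb; cases c <;> simp
        subst hb; subst hc
        match t with
        | 0 =>
          rw [show g (false::y') (true::z') 0 = false from by rw [g]; simp]
          simp only [Bool.false_eq_true, false_iff]
          rintro ⟨x, hx, hf⟩
          have hxe : x = true :: z' := hx.eq_of_length (by
            have := hf.length_eq
            simp only [List.length_cons] at h this ⊢
            omega)
          subst hxe
          cases hf with
          | cons hab _ => exact absurd hab (by decide)
        | t' + 1 =>
          rw [show g (false::y') (true::z') (t'+1) = g (false::y') z' t' from by rw [g]; simp]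
          rw [ih (false::y') t' (by simp only [List.length_cons] at h ⊢; omega)]
          constructor
          · rintro ⟨x, hx, hf⟩
            exact ⟨x, hx.trans (List.sublist_cons_self _ _), hf⟩
          · rintro ⟨x, hx, hf⟩
            cases hf with
            | @cons a _ x'' _ hab hf' =>
              have ha : a = false := by revert hab; cases a <;> simp
              subst ha
              cases hx with
              | cons _ h2 => exact ⟨false :: x'', h2, List.Forall₂.cons hab hf'⟩

/-- Correctness of the greedy coverage check: for `t ≤ m`, a binary list `y` of length `m - t`
and a binary list `z` of length `m`, `g y z t = true` iff some subsequence `x` of `z` of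
length `m - t` is coordinate-wise dominated by `y`. -/
theorem greedy_coverage_correct
    (m t : ℕ) (ht : t ≤ m) (y z : List Bool)
    (hy : y.length = m - t) (hz : z.length = m) :
    g y z t = true ↔
      ∃ x : List Bool, x.Sublist z ∧ x.length = m - t ∧ List.Forall₂ (· ≤ ·) x y := by
  rw [g_iff z y t (by omega)]
  constructor
  · rintro ⟨x, hx, hf⟩
    exact ⟨x, hx, by rw [hf.length_eq, hy], hf⟩
  · rintro ⟨x, hx, _, hf⟩
    exact ⟨x, hx, hf⟩
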